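/- For every integer d ≥ 1 and every norm ‖·‖ on ℂ^{2d}, there exist constants B_d > 0 and b_d > 0 such that: for every vector c = (c_{−d},…,c_{−1},c_1,…,c_d) ∈ ℂ^{2d} with ‖c‖ = 1 and every δ > 0, the Lebesgue measure of the set { x ∈ T : |Σ_{0<|k|≤d} c_k e^{2πikx}| < δ } is strictly less than B_d·δ^{b_d}. -/

import Mathlib

open MeasureTheory Filter
open Polynomial

set_option maxHeartbeats 1000000

noncomputable section

abbrev T1 : Type := UnitAddCircle
abbrev T2 : Type := UnitAddCircle × UnitAddCircle

/-- The linear skew-shift `f(x,y) = (x+α, y+x+β)` on the two-torus. -/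
def skew (α β : ℝ) : T2 → T2 := fun p => (p.1 + (α : T1), p.2 + p.1 + (β : T1))

/-- Birkhoff sums `ψ_n = ∑_{k<n} ψ ∘ f^k`. -/
def birkhoff {X : Type*} (f : X → X) (ψ : X → ℝ) (n : ℕ) (p : X) : ℝ :=
  ∑ k ∈ Finset.range n, ψ (f^[k] p)

/-- Fiber average `φ^⊥(x) = ∫_T Φ(x,s) ds`. -/
def fiberAvg (Φ : T2 → ℝ) : T1 → ℝ := fun x => ∫ s : T1, Φ (x, s)

/-- Fiber projection `φ(x,y) = Φ(x,y) - ∫_T Φ(x,s) ds`. -/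
def fiberProj (Φ : T2 → ℝ) : T2 → ℝ := fun p => Φ p - ∫ s : T1, Φ (p.1, s)

/-- `ψ` is a measurable coboundary for `f`: `ψ = u∘f - u` a.e. for some measurable `u`. -/
def MeasCobound (f : T2 → T2) (ψ : T2 → ℝ) : Prop :=
  ∃ u : T2 → ℝ, Measurable u ∧ ∀ᵐ p : T2, ψ p = u (f p) - u p

/-- `g` is (real-valued and) a trigonometric polynomial of degree at most `d` on the circle. -/
def IsTrigPolyDeg (d : ℕ) (g : T1 → ℝ) : Prop :=
  ∃ c : ℤ → ℂ, ∀ y : T1, (g y : ℂ) = ∑ k ∈ Finset.Icc (-(d : ℤ)) d, c k * fourier k y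

/-- The class `P_d`: continuous functions, trigonometric polynomials of degree `≤ d` in `y`. -/
def InPd (d : ℕ) (Φ : T2 → ℝ) : Prop :=
  Continuous Φ ∧ ∀ x : T1, IsTrigPolyDeg d fun y => Φ (x, y)

/-- The class `R` of roof functions: `Φ ∈ P_d` for some `d ≥ 1` and `φ^⊥` is a
trigonometric polynomial. -/
def InR (Φ : T2 → ℝ) : Prop :=
  (∃ d : ℕ, 1 ≤ d ∧ InPd d Φ) ∧ ∃ d' : ℕ, IsTrigPolyDeg d' (fiberAvg Φ)

/-- The hitting number `n_t(p) = max { n : Φ_n(p) < t }`. -/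
def hitting (f : T2 → T2) (Φ : T2 → ℝ) (t : ℝ) (p : T2) : ℕ :=
  sSup {n : ℕ | birkhoff f Φ n p < t}

/-- Lemma on trigonometric polynomials without constant term.
For every `d ≥ 1` and every norm on `ℂ^{2d}` (coefficients indexed by
`k ∈ {1,…,d} ⊕ {-1,…,-d}`), there are `B_d > 0` and `b_d > 0` such that for every
unit-norm coefficient vector `c` and every `δ > 0`, the measure of
`{x : |∑_{0<|k|≤d} c_k e^{2πikx}| < δ}` is `< B_d δ^{b_d}`. -/
lemma nrm_sum_le {α : Type*} [AddCommMonoid α] (nrm : α → ℝ) (h0 : nrm 0 = 0)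
    (htri : ∀ a b, nrm (a + b) ≤ nrm a + nrm b) {ι : Type*} (t : Finset ι) (f : ι → α) :
    nrm (∑ i ∈ t, f i) ≤ ∑ i ∈ t, nrm (f i) := by
  classical
  induction t using Finset.induction with
  | empty => simp [h0]
  | insert _ _ h ih =>
    rw [Finset.sum_insert h, Finset.sum_insert h]
    exact le_trans (htri _ _) (by linarith)


-- helper: coefficient bound for products of linear factors
lemma coeff_prod_bound {ι : Type*} [DecidableEq ι] (t : Finset ι) (a b : ι → ℂ)
    (hb : ∀ j ∈ t, ‖b j‖ ≤ 1) :
    ∀ k, ‖(∏ j ∈ t, (C (a j) * (X - C (b j)))).coeff k‖ ≤ (∏ j ∈ t, ‖a j‖) * 2 ^ t.card := by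
  induction t using Finset.induction with
  | empty =>
    intro k
    simp only [Finset.prod_empty, Finset.card_empty, pow_zero, mul_one, Polynomial.coeff_one]
    split <;> simp
  | @insert j t hj ih =>
    intro k
    have hbj : ‖b j‖ ≤ 1 := hb j (Finset.mem_insert_self _ _)
    have hb' : ∀ i ∈ t, ‖b i‖ ≤ 1 := fun i hi => hb i (Finset.mem_insert_of_mem hi)
    have hM : (0:ℝ) ≤ (∏ i ∈ t, ‖a i‖) * 2 ^ t.card := by positivity
    have hprod : ∏ i ∈ insert j t, (C (a i) * (X - C (b i)))
        = C (a j) * (X * (∏ i ∈ t, (C (a i) * (X - C (b i)))))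
          - C (a j * b j) * (∏ i ∈ t, (C (a i) * (X - C (b i)))) := by
      rw [Finset.prod_insert hj, map_mul]; ring
    set P := ∏ i ∈ t, (C (a i) * (X - C (b i))) with hP
    rw [hprod, Polynomial.coeff_sub, Polynomial.coeff_C_mul, Polynomial.coeff_C_mul,
      Finset.prod_insert hj, Finset.card_insert_of_notMem hj]
    have hXP : ‖(X * P).coeff k‖ ≤ (∏ i ∈ t, ‖a i‖) * 2 ^ t.card := by
      cases k with
      | zero => rw [Polynomial.mul_coeff_zero, Polynomial.coeff_X_zero, zero_mul, norm_zero]; exact hM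
      | succ m => rw [Polynomial.coeff_X_mul]; exact ih hb' m
    have hPk : ‖P.coeff k‖ ≤ (∏ i ∈ t, ‖a i‖) * 2 ^ t.card := ih hb' k
    refine le_trans (norm_sub_le _ _) ?_
    rw [norm_mul, norm_mul, norm_mul]
    have h1 := mul_le_mul_of_nonneg_left hXP (norm_nonneg (a j))
    have h2 : ‖a j‖ * ‖b j‖ * ‖P.coeff k‖
        ≤ ‖a j‖ * 1 * ((∏ i ∈ t, ‖a i‖) * 2 ^ t.card) := by
      apply mul_le_mul _ hPk (norm_nonneg _) (by positivity)
      simpa using mul_le_mul_of_nonneg_left hbj (norm_nonneg (a j))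
    have h3 : ‖a j‖ * (∏ i ∈ t, ‖a i‖) * 2 ^ (t.card + 1)
        = ‖a j‖ * ((∏ i ∈ t, ‖a i‖) * 2 ^ t.card)
          + ‖a j‖ * 1 * ((∏ i ∈ t, ‖a i‖) * 2 ^ t.card) := by ring
    rw [h3]
    exact add_le_add h1 h2

lemma norm_exp_sub_one (s : ℝ) (hs : |s| ≤ 1/2) :
    4 * |s| ≤ ‖Complex.exp (2 * Real.pi * Complex.I * s) - 1‖ := by
  have hπ := Real.pi_pos
  have key : Complex.exp (2 * Real.pi * Complex.I * s) - 1
      = Complex.exp ((Real.pi * s : ℝ) * Complex.I) * (2 * Complex.sin ((Real.pi * s : ℝ)) * Complex.I) := by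
    rw [show (2 * Real.pi * Complex.I * (s:ℂ)) = (2 * ((Real.pi * s : ℝ) : ℂ)) * Complex.I by
      push_cast; ring]
    rw [Complex.exp_mul_I, Complex.exp_mul_I, Complex.cos_two_mul, Complex.sin_two_mul]
    linear_combination (2 : ℂ) * Complex.sin_sq_add_cos_sq ((Real.pi * s : ℝ) : ℂ)
      - 2 * Complex.sin ((Real.pi * s : ℝ) : ℂ) ^ 2 * Complex.I_sq
  rw [key, norm_mul, norm_mul, norm_mul]
  have h1 : ‖Complex.exp ((Real.pi * s : ℝ) * Complex.I)‖ = 1 := by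
    exact Complex.norm_exp_ofReal_mul_I _
  rw [h1, one_mul, ← Complex.ofReal_sin]
  simp only [Complex.norm_real, Complex.norm_I, Complex.norm_ofNat, mul_one, Real.norm_eq_abs]
  have habs : |Real.sin (Real.pi * s)| = Real.sin (Real.pi * |s|) := by
    rcases abs_cases s with ⟨h1', _⟩ | ⟨h1', h2'⟩
    · rw [h1']
      exact _root_.abs_of_nonneg (Real.sin_nonneg_of_nonneg_of_le_pi (by positivity)
        (by nlinarith [abs_nonneg s, hs, h1']))
    · rw [h1', mul_neg, Real.sin_neg]
      exact _root_.abs_of_nonpos (Real.sin_nonpos_of_nonpos_of_neg_pi_le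
        (by nlinarith) (by nlinarith [hs, h1']))
  rw [habs]
  have := Real.mul_le_sin (x := Real.pi * |s|) (by positivity) (by nlinarith [hs])
  have h2 : 2 / Real.pi * (Real.pi * |s|) = 2 * |s| := by field_simp
  nlinarith [abs_nonneg s]

lemma chord_one (t : T1) : 4 * ‖t‖ ≤ ‖(AddCircle.toCircle t : ℂ) - 1‖ := by
  induction t using QuotientAddGroup.induction_on with
  | H r =>
    set s : ℝ := r - round r with hsdef
    have hs : |s| ≤ 1/2 := by rw [hsdef]; exact abs_sub_round r
    have hcoe : ((s : ℝ) : T1) = ((r : ℝ) : T1) := by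
      rw [hsdef]
      rw [show ((r - round r : ℝ) : T1) = (r : T1) - ((round r : ℝ) : T1) from
        QuotientAddGroup.mk_sub _ _ _]
      have : (((round r : ℤ) : ℝ) : T1) = 0 := by
        rw [AddCircle.coe_eq_zero_iff]; exact ⟨round r, by simp⟩
      rw [this, sub_zero]
    have hnorm : ‖((r : ℝ) : T1)‖ = |s| := UnitAddCircle.norm_eq
    have hval : (AddCircle.toCircle ((s : ℝ) : T1) : ℂ) = Complex.exp (2 * Real.pi * Complex.I * s) := by
      rw [← fourier_one, fourier_coe_apply]
      norm_num
    rw [hnorm, ← hcoe, hval]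
    exact norm_exp_sub_one s hs

lemma chord_two (x y : T1) : 4 * dist x y ≤ ‖(AddCircle.toCircle x : ℂ) - AddCircle.toCircle y‖ := by
  have h : (AddCircle.toCircle x : ℂ) - AddCircle.toCircle y
      = (AddCircle.toCircle y : ℂ) * ((AddCircle.toCircle (x - y) : ℂ) - 1) := by
    have := AddCircle.toCircle_add (x - y) y
    rw [sub_add_cancel] at this
    rw [this]
    push_cast
    ring
  rw [h, norm_mul]
  have h1 : ‖(AddCircle.toCircle y : ℂ)‖ = 1 := by
    exact Circle.norm_coe _
  rw [h1, one_mul, dist_eq_norm]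
  exact chord_one (x - y)

lemma vol_ne_top (E : Set T1) : volume E ≠ ⊤ := by
  refine ne_top_of_le_ne_top ?_ (measure_mono (Set.subset_univ E))
  rw [AddCircle.measure_univ]
  exact ENNReal.ofReal_ne_top

lemma exists_sep (n : ℕ) : ∀ (E : Set T1) (η : ℝ), 0 < η →
    (n : ℝ) * (2 * η) < (volume E).toReal →
    ∃ x : Fin (n + 1) → T1, (∀ i, x i ∈ E) ∧ ∀ i j, i ≠ j → η ≤ dist (x i) (x j) := by
  induction n with
  | zero =>
    intro E η hη h
    simp only [Nat.cast_zero, zero_mul] at h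
    have : volume E ≠ 0 := by
      intro h0; rw [h0] at h; simp at h
    obtain ⟨x₀, hx₀⟩ := nonempty_of_measure_ne_zero this
    refine ⟨fun _ => x₀, fun _ => hx₀, fun i j hij => absurd ?_ hij⟩
    omega
  | succ n ih =>
    intro E η hη h
    have hE0 : volume E ≠ 0 := by
      intro h0
      rw [h0] at h
      simp only [ENNReal.toReal_zero] at h
      nlinarith [hη, Nat.cast_nonneg (α := ℝ) (n+1)]
    obtain ⟨x₀, hx₀⟩ := nonempty_of_measure_ne_zero hE0
    set E' := E \ Metric.closedBall x₀ η with hE'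
    have hsub : E ⊆ E' ∪ Metric.closedBall x₀ η := by
      intro y hy
      by_cases hb : y ∈ Metric.closedBall x₀ η
      · exact Or.inr hb
      · exact Or.inl ⟨hy, hb⟩
    have hball : (volume (Metric.closedBall x₀ η)).toReal ≤ 2 * η := by
      rw [AddCircle.volume_closedBall, ENNReal.toReal_ofReal (by
        rcases min_cases 1 (2*η) with ⟨h1, _⟩ | ⟨h1, _⟩ <;> rw [h1] <;> positivity)]
      exact min_le_right _ _
    have hmeas : (volume E).toReal ≤ (volume E').toReal + (volume (Metric.closedBall x₀ η)).toReal := by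
      have h1 : volume E ≤ volume E' + volume (Metric.closedBall x₀ η) :=
        le_trans (measure_mono hsub) (measure_union_le _ _)
      have h2 := ENNReal.toReal_mono (by
        exact ENNReal.add_ne_top.mpr ⟨vol_ne_top _, vol_ne_top _⟩) h1
      rwa [ENNReal.toReal_add (vol_ne_top _) (vol_ne_top _)] at h2
    have hE'vol : (n : ℝ) * (2 * η) < (volume E').toReal := by
      push_cast at h
      nlinarith [hmeas, hball, h]
    obtain ⟨x', hx'E, hx'sep⟩ := ih E' η hη hE'vol
    have hx'dist : ∀ j, η ≤ dist x₀ (x' j) := by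
      intro j
      have := (hx'E j).2
      rw [Metric.mem_closedBall] at this
      rw [dist_comm]
      linarith [not_le.mp this]
    refine ⟨Fin.cons x₀ x', ?_, ?_⟩
    · intro i
      refine Fin.cases ?_ ?_ i
      · exact hx₀
      · exact fun j => (hx'E j).1
    · intro i j hij
      rcases Fin.eq_zero_or_eq_succ i with rfl | ⟨i', rfl⟩ <;>
        rcases Fin.eq_zero_or_eq_succ j with rfl | ⟨j', rfl⟩
      · exact absurd rfl hij
      · simpa using hx'dist j'
      · rw [dist_comm]
        simpa using hx'dist i'
      · have hne : i' ≠ j' := by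
          intro hcon
          exact hij (by rw [hcon])
        simpa using hx'sep i' j' hne

lemma fourier_npow (x : T1) (k : ℕ) :
    (AddCircle.toCircle x : ℂ) ^ k = fourier (k : ℤ) x := by
  induction k with
  | zero => simp [fourier_zero]
  | succ m ih =>
    have : ((m + 1 : ℕ) : ℤ) = (m : ℤ) + 1 := by push_cast; ring
    rw [pow_succ, ih, this, fourier_add, fourier_one]


theorem stmt3 (d : ℕ) (hd : 1 ≤ d) (nrm : ((Fin d ⊕ Fin d) → ℂ) → ℝ)
    (hzero : ∀ c, nrm c = 0 ↔ c = 0)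
    (hsmul : ∀ (a : ℂ) (c), nrm (a • c) = ‖a‖ * nrm c)
    (htri : ∀ c c', nrm (c + c') ≤ nrm c + nrm c') :
    ∃ B > (0 : ℝ), ∃ b > (0 : ℝ), ∀ c : (Fin d ⊕ Fin d) → ℂ, nrm c = 1 → ∀ δ > (0 : ℝ),
      (volume {x : T1 |
          ‖∑ i : Fin d,
              (c (Sum.inl i) * fourier (((i : ℕ) : ℤ) + 1) x
                + c (Sum.inr i) * fourier (-(((i : ℕ) : ℤ) + 1)) x)‖ < δ}).toReal
        < B * δ ^ b := by
  classical
  have h0 : nrm 0 = 0 := by simpa using hsmul 0 0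
  have hnonneg : ∀ c, 0 ≤ nrm c := by
    intro c
    have h1 := htri c (-c)
    have h2 : nrm (-c) = nrm c := by simpa using hsmul (-1) c
    have h3 : c + -c = 0 := by simp
    rw [h3, h0] at h1
    linarith
  have hsinglepos : ∀ s : Fin d ⊕ Fin d, 0 < nrm (Pi.single s 1) := by
    intro s
    rcases lt_or_eq_of_le (hnonneg (Pi.single s 1)) with h | h
    · exact h
    · exfalso
      have := (hzero (Pi.single s 1)).mp h.symm
      have h1 := congrFun this s
      simp at h1
  set M : ℝ := ∑ s : Fin d ⊕ Fin d, nrm (Pi.single s 1) with hMdef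
  have hM : 0 < M := Finset.sum_pos (fun s _ => hsinglepos s) ⟨Sum.inl ⟨0, hd⟩, Finset.mem_univ _⟩
  set n : ℕ := 2 * d with hndef
  have hn0 : ((n : ℝ)) ≠ 0 := by
    simp only [hndef]; push_cast; positivity
  set K : ℝ := M * ((n : ℝ) + 1) ^ (n + 1) * 2 ^ n with hKdef
  have hK : 0 < K := by positivity
  refine ⟨K ^ ((n : ℝ)⁻¹) + 1, by positivity, (n : ℝ)⁻¹, by positivity, ?_⟩
  intro c hc δ hδ
  set E := {x : T1 |
      ‖∑ i : Fin d,
          (c (Sum.inl i) * fourier (((i : ℕ) : ℤ) + 1) x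
            + c (Sum.inr i) * fourier (-(((i : ℕ) : ℤ) + 1)) x)‖ < δ} with hE
  set ε := (volume E).toReal with hεdef
  have hε0 : (0:ℝ) ≤ ε := ENNReal.toReal_nonneg
  rcases eq_or_lt_of_le hε0 with heq | hε
  · rw [← heq]; positivity
  -- argmax coefficient
  obtain ⟨s0, -, hs0⟩ := Finset.exists_max_image Finset.univ (fun s => ‖c s‖)
    ⟨Sum.inl ⟨0, hd⟩, Finset.mem_univ _⟩
  have hcs0 : 1 ≤ ‖c s0‖ * M := by
    have hdecomp : c = ∑ s : Fin d ⊕ Fin d, Pi.single s (c s) := (Finset.univ_sum_single c).symm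
    have h1 : nrm c ≤ ∑ s : Fin d ⊕ Fin d, nrm (Pi.single s (c s)) := by
      conv_lhs => rw [hdecomp]
      exact nrm_sum_le nrm h0 htri _ _
    have h2 : ∀ s : Fin d ⊕ Fin d, nrm (Pi.single s (c s)) = ‖c s‖ * nrm (Pi.single s 1) := by
      intro s
      have hss : (Pi.single s (c s) : (Fin d ⊕ Fin d) → ℂ)
          = c s • (Pi.single s 1 : (Fin d ⊕ Fin d) → ℂ) := by
        funext t
        by_cases h : t = s <;> simp [Pi.single_apply, h]
      rw [hss, hsmul]
    calc (1:ℝ) = nrm c := hc.symm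
      _ ≤ ∑ s : Fin d ⊕ Fin d, nrm (Pi.single s (c s)) := h1
      _ = ∑ s : Fin d ⊕ Fin d, ‖c s‖ * nrm (Pi.single s 1) := Finset.sum_congr rfl fun s _ => h2 s
      _ ≤ ∑ s : Fin d ⊕ Fin d, ‖c s0‖ * nrm (Pi.single s 1) :=
          Finset.sum_le_sum fun s _ =>
            mul_le_mul_of_nonneg_right (hs0 s (Finset.mem_univ s)) (hnonneg _)
      _ = ‖c s0‖ * M := by rw [hMdef, Finset.mul_sum]
  -- the polynomial
  set expo : Fin d ⊕ Fin d → ℕ :=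
    Sum.elim (fun i => d + 1 + (i : ℕ)) (fun i => d - 1 - (i : ℕ)) with hexpodef
  have hexpo_le : ∀ s, expo s ≤ n := by
    rintro (⟨i, hi⟩ | ⟨i, hi⟩) <;>
      simp only [hexpodef, hndef, Sum.elim_inl, Sum.elim_inr] <;> omega
  have hexpo_inj : Function.Injective expo := by
    rintro (⟨i, hi⟩ | ⟨i, hi⟩) (⟨j, hj⟩ | ⟨j, hj⟩) h <;>
      simp only [hexpodef, Sum.elim_inl, Sum.elim_inr] at h
    · simp only [Sum.inl.injEq, Fin.mk.injEq]; omega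
    · exact absurd h (by omega)
    · exact absurd h (by omega)
    · simp only [Sum.inr.injEq, Fin.mk.injEq]; omega
  set Q : Polynomial ℂ := ∑ s : Fin d ⊕ Fin d, Polynomial.C (c s) * Polynomial.X ^ expo s
    with hQdef
  have hQcoeff : ∀ s, Q.coeff (expo s) = c s := by
    intro s
    rw [hQdef, Polynomial.finset_sum_coeff]
    simp_rw [Polynomial.coeff_C_mul, Polynomial.coeff_X_pow]
    rw [Finset.sum_eq_single s]
    · simp
    · intro s' _ hne
      rw [if_neg fun h => hne (hexpo_inj h.symm), mul_zero]
    · intro h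
      exact absurd (Finset.mem_univ s) h
  have hQdeg : Q.degree < ((n + 1 : ℕ) : WithBot ℕ) := by
    refine lt_of_le_of_lt (Polynomial.degree_sum_le _ _) ?_
    rw [Finset.sup_lt_iff (by exact WithBot.bot_lt_coe _)]
    intro s _
    refine lt_of_le_of_lt (Polynomial.degree_C_mul_X_pow_le _ _) ?_
    exact_mod_cast Nat.lt_succ_of_le (hexpo_le s)
  have hfn : ∀ (m : ℤ) (x : T1), ‖fourier m x‖ = 1 := by
    intro m x
    rw [fourier_apply]
    exact Circle.norm_coe _
  have hQsmall : ∀ x : T1, x ∈ E → ‖Q.eval (AddCircle.toCircle x : ℂ)‖ < δ := by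
    intro x hx
    rw [hE, Set.mem_setOf_eq] at hx
    have h1 : ∀ i : Fin d, (AddCircle.toCircle x : ℂ) ^ (d + 1 + (i : ℕ))
        = fourier (d : ℤ) x * fourier (((i : ℕ) : ℤ) + 1) x := by
      intro i
      rw [fourier_npow, ← fourier_add]
      congr 1
      push_cast
      ring
    have h2 : ∀ i : Fin d, (AddCircle.toCircle x : ℂ) ^ (d - 1 - (i : ℕ))
        = fourier (d : ℤ) x * fourier (-(((i : ℕ) : ℤ) + 1)) x := by
      intro i
      have hi : (i : ℕ) < d := i.isLt
      have hidx : ((d - 1 - (i : ℕ) : ℕ) : ℤ) = (d : ℤ) + -(((i : ℕ) : ℤ) + 1) := by omega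
      rw [fourier_npow, hidx, fourier_add]
    have heval : Q.eval (AddCircle.toCircle x : ℂ)
        = fourier (d : ℤ) x * ∑ i : Fin d,
            (c (Sum.inl i) * fourier (((i : ℕ) : ℤ) + 1) x
              + c (Sum.inr i) * fourier (-(((i : ℕ) : ℤ) + 1)) x) := by
      rw [hQdef, Polynomial.eval_finset_sum]
      simp only [Polynomial.eval_mul, Polynomial.eval_C, Polynomial.eval_pow, Polynomial.eval_X]
      rw [Fintype.sum_sum_type]
      simp only [hexpodef, Sum.elim_inl, Sum.elim_inr]
      rw [← Finset.sum_add_distrib, Finset.mul_sum]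
      refine Finset.sum_congr rfl fun i _ => ?_
      rw [h1 i, h2 i]
      ring
    rw [heval, norm_mul, hfn, one_mul]
    exact hx
  -- select separated points in E
  set η : ℝ := ε / (4 * ((n : ℝ) + 1)) with hηdef
  have hηpos : 0 < η := by positivity
  have hlt : (n : ℝ) * (2 * η) < (volume E).toReal := by
    rw [← hεdef, hηdef]
    rw [show (n : ℝ) * (2 * (ε / (4 * ((n : ℝ) + 1)))) = ε * ((2 * (n : ℝ)) / (4 * ((n : ℝ) + 1)))
      from by ring]
    have hq : (2 * (n : ℝ)) / (4 * ((n : ℝ) + 1)) < 1 := by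
      rw [div_lt_one (by positivity)]
      have : (0:ℝ) ≤ (n : ℝ) := Nat.cast_nonneg n
      linarith
    calc ε * ((2 * (n : ℝ)) / (4 * ((n : ℝ) + 1))) < ε * 1 := by
          exact mul_lt_mul_of_pos_left hq hε
      _ = ε := mul_one ε
  obtain ⟨x, hxE, hxsep⟩ := exists_sep n E η hηpos hlt
  set v : Fin (n + 1) → ℂ := fun i => (AddCircle.toCircle (x i) : ℂ) with hvdef
  have hvsep : ∀ i j, i ≠ j → 4 * η ≤ ‖v i - v j‖ := by
    intro i j hij
    refine le_trans ?_ (chord_two (x i) (x j))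
    have := hxsep i j hij
    nlinarith
  have hvinj : Set.InjOn v ((Finset.univ : Finset (Fin (n + 1))) : Set (Fin (n + 1))) := by
    intro i _ j _ hvij
    by_contra hne
    have h1 := hvsep i j hne
    rw [hvij, sub_self, norm_zero] at h1
    nlinarith
  have hcard : (Finset.univ : Finset (Fin (n + 1))).card = n + 1 := by simp
  have hQinterp : Lagrange.interpolate Finset.univ v (fun i => Q.eval (v i)) = Q := by
    refine (Lagrange.eq_interpolate hvinj ?_).symm
    rw [hcard]
    exact hQdeg
  -- coefficient bound via Lagrange basis
  have hbasis : ∀ i : Fin (n + 1),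
      ‖(Lagrange.basis Finset.univ v i).coeff (expo s0)‖ ≤ (4 * η)⁻¹ ^ n * 2 ^ n := by
    intro i
    have hcard' : (Finset.univ.erase i).card = n := by
      rw [Finset.card_erase_of_mem (Finset.mem_univ i), hcard]
      omega
    have hbeq : Lagrange.basis Finset.univ v i
        = ∏ j ∈ Finset.univ.erase i,
            (Polynomial.C ((v i - v j)⁻¹) * (Polynomial.X - Polynomial.C (v j))) := by
      rw [Lagrange.basis]
      exact Finset.prod_congr rfl fun j _ => rfl
    rw [hbeq]
    refine le_trans (coeff_prod_bound _ _ _ (fun j _ => ?_) (expo s0)) ?_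
    · have hvj : ‖v j‖ = 1 := by
        rw [hvdef]
        exact Circle.norm_coe _
      rw [hvj]
    · rw [hcard']
      refine mul_le_mul_of_nonneg_right ?_ (by positivity)
      calc (∏ j ∈ Finset.univ.erase i, ‖(v i - v j)⁻¹‖)
          ≤ ∏ j ∈ Finset.univ.erase i, (4 * η)⁻¹ := by
            refine Finset.prod_le_prod (fun j _ => norm_nonneg _) fun j hj => ?_
            rw [norm_inv]
            refine inv_anti₀ (by positivity) ?_
            exact hvsep i j (Ne.symm (Finset.mem_erase.mp hj).1)
        _ = (4 * η)⁻¹ ^ n := by rw [Finset.prod_const, hcard']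
  have hQsmall' : ∀ i : Fin (n + 1), ‖Q.eval (v i)‖ < δ := fun i => hQsmall (x i) (hxE i)
  have hmain : ‖c s0‖ ≤ ((n : ℝ) + 1) * (δ * ((4 * η)⁻¹ ^ n * 2 ^ n)) := by
    rw [← hQcoeff s0, ← hQinterp, Lagrange.interpolate_apply, Polynomial.finset_sum_coeff]
    simp_rw [Polynomial.coeff_C_mul]
    refine le_trans (norm_sum_le _ _) ?_
    have hterm : ∀ i : Fin (n + 1),
        ‖Q.eval (v i) * (Lagrange.basis Finset.univ v i).coeff (expo s0)‖
          ≤ δ * ((4 * η)⁻¹ ^ n * 2 ^ n) := by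
      intro i
      rw [norm_mul]
      exact mul_le_mul (le_of_lt (hQsmall' i)) (hbasis i) (norm_nonneg _) (le_of_lt hδ)
    calc (∑ i : Fin (n + 1), ‖Q.eval (v i) * (Lagrange.basis Finset.univ v i).coeff (expo s0)‖)
        ≤ ∑ _i : Fin (n + 1), δ * ((4 * η)⁻¹ ^ n * 2 ^ n) :=
          Finset.sum_le_sum fun i _ => hterm i
      _ = ((n : ℝ) + 1) * (δ * ((4 * η)⁻¹ ^ n * 2 ^ n)) := by
          rw [Finset.sum_const, Finset.card_univ, Fintype.card_fin, nsmul_eq_mul]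
          push_cast
          ring
  -- final arithmetic
  have h4η : 4 * η = ε / ((n : ℝ) + 1) := by
    rw [hηdef]
    field_simp
  have hKδ : ε ^ n ≤ K * δ := by
    have h1 : 1 ≤ ((n : ℝ) + 1) * (δ * ((4 * η)⁻¹ ^ n * 2 ^ n)) * M :=
      le_trans hcs0 (mul_le_mul_of_nonneg_right hmain hM.le)
    rw [h4η, inv_div, div_pow] at h1
    have hεn : (0:ℝ) < ε ^ n := pow_pos hε n
    have h2 : ε ^ n * 1 ≤ ε ^ n * (((n : ℝ) + 1) * (δ * (((n : ℝ) + 1) ^ n / ε ^ n * 2 ^ n)) * M) :=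
      mul_le_mul_of_nonneg_left h1 hεn.le
    calc ε ^ n = ε ^ n * 1 := (mul_one _).symm
      _ ≤ ε ^ n * (((n : ℝ) + 1) * (δ * (((n : ℝ) + 1) ^ n / ε ^ n * 2 ^ n)) * M) := h2
      _ = K * δ := by
          rw [hKdef]
          field_simp
          ring
  have hb0 : (0:ℝ) ≤ (n : ℝ)⁻¹ := by positivity
  have h3 : ε ≤ (K * δ) ^ ((n : ℝ)⁻¹) := by
    have h4 := Real.rpow_le_rpow (pow_nonneg hε0 n) hKδ hb0
    rwa [← Real.rpow_natCast ε n, ← Real.rpow_mul hε0, mul_inv_cancel₀ hn0,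
      Real.rpow_one] at h4
  have h5 : (K * δ) ^ ((n : ℝ)⁻¹) = K ^ ((n : ℝ)⁻¹) * δ ^ ((n : ℝ)⁻¹) :=
    Real.mul_rpow hK.le hδ.le
  have h6 : (0:ℝ) < δ ^ ((n : ℝ)⁻¹) := Real.rpow_pos_of_pos hδ _
  nlinarith [h3, h5, h6]
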